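/- arXiv:1902.07689 — 4 statements merged into one kernel-verified Lean document; each statement's English description precedes it below -/
import Mathlib

section
/- Let 𝓛 be a nest on a complex separable Hilbert space H and let S be a subset of H not containing 0. If M_x ≠ M_y for all distinct x, y ∈ S, then S is a linearly independent set. -/
open scoped InnerProductSpace

variable {H : Type*} [NormedAddCommGroup H] [InnerProductSpace ℂ H]
  [CompleteSpace H] [TopologicalSpace.SeparableSpace H]

/-- A subspace lattice on `H`: a set of closed subspaces containing `⊥` and `⊤`,
closed under arbitrary intersections and closed linear spans. -/
def IsSubspaceLattice (𝓛 : Set (Submodule ℂ H)) : Prop :=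
  (∀ M ∈ 𝓛, IsClosed (M : Set H)) ∧ ⊥ ∈ 𝓛 ∧ ⊤ ∈ 𝓛 ∧
  (∀ S ⊆ 𝓛, sInf S ∈ 𝓛) ∧ (∀ S ⊆ 𝓛, (sSup S).topologicalClosure ∈ 𝓛)

/-- A nest: a totally ordered subspace lattice. -/
def IsNest (𝓛 : Set (Submodule ℂ H)) : Prop :=
  IsSubspaceLattice 𝓛 ∧ ∀ M ∈ 𝓛, ∀ N ∈ 𝓛, M ≤ N ∨ N ≤ M

/-- A continuous nest. -/
def IsContinuousNest (𝓛 : Set (Submodule ℂ H)) : Prop :=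
  IsNest 𝓛 ∧ ∀ M ∈ 𝓛, M = (sSup {N ∈ 𝓛 | N < M}).topologicalClosure

/-- `M_x`: the intersection of all members of `𝓛` containing `x`. -/
noncomputable def Mx (𝓛 : Set (Submodule ℂ H)) (x : H) : Submodule ℂ H :=
  sInf {M ∈ 𝓛 | x ∈ M}

/-- `M̂_x`: the closed span of all members of `𝓛` orthogonal to `x`. -/
noncomputable def Mhat (𝓛 : Set (Submodule ℂ H)) (x : H) : Submodule ℂ H :=
  (sSup {M ∈ 𝓛 | ∀ v ∈ M, inner ℂ x v = (0 : ℂ)}).topologicalClosure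

/-- `φ_T(M)`: the closed span of all members `M'` of `𝓛` with `T(M') ⊆ M`. -/
noncomputable def phiT (𝓛 : Set (Submodule ℂ H)) (T : H →L[ℂ] H) (M : Submodule ℂ H) :
    Submodule ℂ H :=
  (sSup {M' ∈ 𝓛 | ∀ v ∈ M', T v ∈ M}).topologicalClosure

/-- `Ψ_T(M)`: the intersection of all `M' ∈ 𝓛` with `φ_T(M') = φ_T(M)`. -/
noncomputable def PsiT (𝓛 : Set (Submodule ℂ H)) (T : H →L[ℂ] H) (M : Submodule ℂ H) :
    Submodule ℂ H :=
  sInf {M' ∈ 𝓛 | phiT 𝓛 T M' = phiT 𝓛 T M}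

/-- `σ_T(M)`: the closed span of all `M' ∈ 𝓛` with `φ_T(M') = φ_T(M)`. -/
noncomputable def sigmaT (𝓛 : Set (Submodule ℂ H)) (T : H →L[ℂ] H) (M : Submodule ℂ H) :
    Submodule ℂ H :=
  (sSup {M' ∈ 𝓛 | phiT 𝓛 T M' = phiT 𝓛 T M}).topologicalClosure

/-- The kernel map `ω_T`. -/
noncomputable def omegaT (𝓛 : Set (Submodule ℂ H)) (T : H →L[ℂ] H) (M : Submodule ℂ H) :
    Submodule ℂ H × Submodule ℂ H :=
  (phiT 𝓛 T M, PsiT 𝓛 T M)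

/-- The rank-one operator `x ⊗ y : z ↦ ⟨z, y⟩ x`. -/
noncomputable def rankOne (x y : H) : H →L[ℂ] H :=
  (innerSL ℂ y).smulRight x

/-- The nest algebra of a subspace lattice. -/
def nestAlg (𝓛 : Set (Submodule ℂ H)) : Set (H →L[ℂ] H) :=
  {T | ∀ M ∈ 𝓛, ∀ v ∈ M, T v ∈ M}

/-- Lie module over the nest algebra. -/
def IsLieModule (𝓛 : Set (Submodule ℂ H)) (𝓜 : Submodule ℂ (H →L[ℂ] H)) : Prop :=
  ∀ A ∈ 𝓜, ∀ T ∈ nestAlg 𝓛, A.comp T - T.comp A ∈ 𝓜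

/-- Orthogonal projection of a vector onto a closed subspace (junk value `0` if not closed). -/

lemma finset_exists_max {ι : Type*} (f : ι → Submodule ℂ H)
    (htot : ∀ a b, f a ≤ f b ∨ f b ≤ f a) (t : Finset ι) (ht : t.Nonempty) :
    ∃ m ∈ t, ∀ j ∈ t, f j ≤ f m := by
  classical
  induction t using Finset.induction with
  | empty => exact absurd ht (by simp)
  | @insert a s ha ih =>
    rcases s.eq_empty_or_nonempty with rfl | hs
    · exact ⟨a, by simp, by simp⟩
    · obtain ⟨m, hm, hmax⟩ := ih hs
      rcases htot a m with h | h
      · exact ⟨m, Finset.mem_insert_of_mem hm, by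
          intro j hj
          rcases Finset.mem_insert.1 hj with rfl | hj
          · exact h
          · exact hmax j hj⟩
      · exact ⟨a, Finset.mem_insert_self _ _, by
          intro j hj
          rcases Finset.mem_insert.1 hj with rfl | hj
          · exact le_rfl
          · exact (hmax j hj).trans h⟩

noncomputable def projVec (N : Submodule ℂ H) (z : H) : H := by
  classical
  exact if h : IsClosed (N : Set H) then
    have : CompleteSpace N := h.completeSpace_coe
    (N.orthogonalProjectionOnto z : H)
  else 0

theorem stmt_1 (𝓛 : Set (Submodule ℂ H)) (h𝓛 : IsNest 𝓛) (S : Set H)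
    (h0 : (0 : H) ∉ S)
    (hS : ∀ x ∈ S, ∀ y ∈ S, x ≠ y → Mx 𝓛 x ≠ Mx 𝓛 y) :
    LinearIndependent ℂ (fun s : S => (s : H)) := by
  classical
  obtain ⟨⟨_, _, _, hInf, _⟩, htot⟩ := h𝓛
  have hMxmem : ∀ x : H, Mx 𝓛 x ∈ 𝓛 := fun x =>
    hInf _ (fun M hM => hM.1)
  have hxMx : ∀ x : H, x ∈ Mx 𝓛 x := fun x =>
    Submodule.mem_sInf.2 fun M hM => hM.2
  have hMxle : ∀ (x : H) (M : Submodule ℂ H), M ∈ 𝓛 → x ∈ M → Mx 𝓛 x ≤ M :=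
    fun x M hM hx => sInf_le ⟨hM, hx⟩
  rw [linearIndependent_iff']
  intro s g hsum i hi
  by_contra hgi
  set t : Finset S := s.filter (fun j => g j ≠ 0) with ht_def
  have hit : i ∈ t := Finset.mem_filter.2 ⟨hi, hgi⟩
  have htsum : ∑ j ∈ t, g j • (j : H) = 0 := by
    rw [← hsum]
    apply Finset.sum_subset (Finset.filter_subset _ _)
    intro j hj hjt
    have : g j = 0 := by
      by_contra h
      exact hjt (Finset.mem_filter.2 ⟨hj, h⟩)
    simp [this]
  have hcomp : ∀ a b : S, Mx 𝓛 (a : H) ≤ Mx 𝓛 (b : H) ∨ Mx 𝓛 (b : H) ≤ Mx 𝓛 (a : H) :=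
    fun a b => htot _ (hMxmem _) _ (hMxmem _)
  obtain ⟨m, hmt, hmax⟩ := finset_exists_max (fun j : S => Mx 𝓛 (j : H)) hcomp t ⟨i, hit⟩
  have hgm : g m ≠ 0 := (Finset.mem_filter.1 hmt).2
  have hsum' : g m • (m : H) + ∑ j ∈ t.erase m, g j • (j : H) = 0 :=
    (Finset.add_sum_erase t (fun j : S => g j • (j : H)) hmt).trans htsum
  rcases (t.erase m).eq_empty_or_nonempty with he | ⟨m', hm'⟩
  · rw [he, Finset.sum_empty, add_zero] at hsum'
    rcases smul_eq_zero.1 hsum' with h | h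
    · exact hgm h
    · exact h0 (h ▸ m.2)
  · obtain ⟨m'', hm''t, hmax'⟩ := finset_exists_max (fun j : S => Mx 𝓛 (j : H)) hcomp
      (t.erase m) ⟨m', hm'⟩
    have hm''ne : m'' ≠ m := Finset.ne_of_mem_erase hm''t
    have hm''mem : (m'' : S) ∈ t := Finset.mem_of_mem_erase hm''t
    -- the sum lies in Mx x_{m''}
    have hsummem : ∑ j ∈ t.erase m, g j • (j : H) ∈ Mx 𝓛 (m'' : H) := by
      apply Submodule.sum_mem
      intro j hj
      exact Submodule.smul_mem _ _ (hmax' j hj (hxMx (j : H)))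
    have hmm : (m : H) ∈ Mx 𝓛 (m'' : H) := by
      have h1 : g m • (m : H) ∈ Mx 𝓛 (m'' : H) := by
        have : g m • (m : H) = -∑ j ∈ t.erase m, g j • (j : H) := by
          linear_combination (norm := module) hsum'
        rw [this]
        exact Submodule.neg_mem _ hsummem
      have := Submodule.smul_mem _ (g m)⁻¹ h1
      rwa [smul_smul, inv_mul_cancel₀ hgm, one_smul] at this
    have hle1 : Mx 𝓛 (m : H) ≤ Mx 𝓛 (m'' : H) := hMxle _ _ (hMxmem _) hmm
    have hle2 : Mx 𝓛 (m'' : H) ≤ Mx 𝓛 (m : H) := hmax m'' hm''mem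
    have hne : (m : H) ≠ (m'' : H) := by
      intro h
      exact hm''ne (Subtype.ext h.symm)
    exact hS (m : H) m.2 (m'' : H) m''.2 hne (le_antisymm hle1 hle2)
end

section
/- Let 𝓛 be a subspace lattice on a complex separable Hilbert space H, let T be a bounded operator on H and let M ∈ 𝓛. Then Ψ_T(M) equals the intersection of {N ∈ 𝓛 : T(φ_T(M)) ⊆ N}. (In projection terms: ψ_T(P) = ⋁{Q^⊥ ∈ 𝓛^⊥ : Q^⊥ T φ_T(P) = 0}.) -/
open scoped InnerProductSpace

variable {H : Type*} [NormedAddCommGroup H] [InnerProductSpace ℂ H]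
  [CompleteSpace H] [TopologicalSpace.SeparableSpace H]

lemma phiT_mapsTo (𝓛 : Set (Submodule ℂ H)) (T : H →L[ℂ] H) {N : Submodule ℂ H}
    (hN : IsClosed (N : Set H)) : ∀ v ∈ phiT 𝓛 T N, T v ∈ N := by
  intro v hv
  have hsub : sSup {M' ∈ 𝓛 | ∀ v ∈ M', T v ∈ N} ≤ N.comap (T : H →ₗ[ℂ] H) := by
    apply sSup_le
    intro M' hM' x hx
    exact hM'.2 x hx
  have hclosed : IsClosed ((N.comap (T : H →ₗ[ℂ] H) : Submodule ℂ H) : Set H) :=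
    hN.preimage T.continuous
  exact Submodule.topologicalClosure_minimal _ hsub hclosed hv

lemma phiT_mono (𝓛 : Set (Submodule ℂ H)) (T : H →L[ℂ] H) {M₁ M₂ : Submodule ℂ H}
    (h : M₁ ≤ M₂) : phiT 𝓛 T M₁ ≤ phiT 𝓛 T M₂ :=
  Submodule.topologicalClosure_mono
    (sSup_le_sSup (fun M' hM' => ⟨hM'.1, fun v hv => h (hM'.2 v hv)⟩))

theorem stmt_3 (𝓛 : Set (Submodule ℂ H)) (h𝓛 : IsSubspaceLattice 𝓛)
    (T : H →L[ℂ] H) (M : Submodule ℂ H) (hM : M ∈ 𝓛) :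
    PsiT 𝓛 T M = sInf {N ∈ 𝓛 | ∀ v ∈ phiT 𝓛 T M, T v ∈ N} := by
  obtain ⟨hclosed, -, -, hinf, -⟩ := h𝓛
  set S : Set (Submodule ℂ H) := {N ∈ 𝓛 | ∀ v ∈ phiT 𝓛 T M, T v ∈ N} with hS
  have hSsub : S ⊆ 𝓛 := fun N hN => hN.1
  have hN₀mem : sInf S ∈ 𝓛 := hinf S hSsub
  have hMinS : M ∈ S := ⟨hM, phiT_mapsTo 𝓛 T (hclosed M hM)⟩
  have hTN₀ : ∀ v ∈ phiT 𝓛 T M, T v ∈ sInf S := by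
    intro v hv
    rw [Submodule.mem_sInf]
    exact fun p hp => hp.2 v hv
  have hφge : phiT 𝓛 T M ≤ phiT 𝓛 T (sInf S) := by
    apply Submodule.topologicalClosure_mono
    apply sSup_le_sSup
    intro M' hM'
    have hle : M' ≤ phiT 𝓛 T M :=
      le_trans (le_sSup hM') (Submodule.le_topologicalClosure _)
    exact ⟨hM'.1, fun v hv => hTN₀ v (hle hv)⟩
  have hφeq : phiT 𝓛 T (sInf S) = phiT 𝓛 T M :=
    le_antisymm (phiT_mono 𝓛 T (sInf_le hMinS)) hφge
  apply le_antisymm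
  · exact sInf_le ⟨hN₀mem, hφeq⟩
  · apply le_sInf
    rintro M' ⟨hM'𝓛, hM'eq⟩
    refine sInf_le ⟨hM'𝓛, fun v hv => ?_⟩
    rw [← hM'eq] at hv
    exact phiT_mapsTo 𝓛 T (hclosed M' hM'𝓛) v hv
end

section
/- Let 𝓛 be a nest on a complex separable Hilbert space H and let T be a bounded operator on H. Then for every M ∈ 𝓛 there exists x ∈ H such that φ_T(M) = M_x and Ψ_T(M) = M_{Tx}. (In projection terms: ω_T(P) = (P_x, P_{Tx}^⊥).) -/
open scoped InnerProductSpace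

variable {H : Type*} [NormedAddCommGroup H] [InnerProductSpace ℂ H]
  [CompleteSpace H] [TopologicalSpace.SeparableSpace H]

set_option linter.unusedSectionVars false

lemma countable_cofinal (𝓛 : Set (Submodule ℂ H))
    (htot : ∀ M ∈ 𝓛, ∀ N ∈ 𝓛, M ≤ N ∨ N ≤ M)
    (hcl : ∀ M ∈ 𝓛, IsClosed (M : Set H))
    (C : Set (Submodule ℂ H)) (hC : C ⊆ 𝓛) :
    ∃ s ⊆ C, s.Countable ∧ ∀ N ∈ C, ∃ A ∈ s, N ≤ A := by
  classical
  haveI : SecondCountableTopology H :=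
    UniformSpace.secondCountable_of_separable H
  set U : Set H := ⋃ N ∈ C, (N : Set H) with hU
  obtain ⟨d, hdcnt, hddense⟩ := TopologicalSpace.exists_countable_dense (↥U)
  have hch : ∀ y : ↥U, ∃ N, N ∈ C ∧ (y : H) ∈ N := by
    intro y
    rcases Set.mem_iUnion₂.1 y.2 with ⟨N, hN, hy⟩
    exact ⟨N, hN, hy⟩
  choose g hg1 hg2 using hch
  have hsub : Set.Subsingleton {N | N ∈ C ∧ ∀ N' ∈ C, N' ≤ N} := by
    intro a ha b hb
    exact le_antisymm (hb.2 a ha.1) (ha.2 b hb.1)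
  refine ⟨(g '' d) ∪ {N | N ∈ C ∧ ∀ N' ∈ C, N' ≤ N}, ?_, ?_, ?_⟩
  · rintro A (⟨y, _, rfl⟩ | hA)
    · exact hg1 y
    · exact hA.1
  · exact (hdcnt.image g).union hsub.countable
  · intro N hN
    by_cases hex : ∃ y ∈ d, N ≤ g y
    · rcases hex with ⟨y, hy, hle⟩
      exact ⟨g y, Or.inl ⟨y, hy, rfl⟩, hle⟩
    · push_neg at hex
      have hdn : ∀ y ∈ d, (y : H) ∈ N := by
        intro y hy
        rcases htot N (hC hN) (g y) (hC (hg1 y)) with h | h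
        · exact absurd h (hex y hy)
        · exact h (hg2 y)
      have hUN : U ⊆ (N : Set H) := by
        intro u hu
        have h1 : u ∈ closure (Subtype.val '' d) :=
          image_closure_subset_closure_image (continuous_subtype_val (p := (· ∈ U)))
            ⟨⟨u, hu⟩, hddense _, rfl⟩
        have h2 : closure (Subtype.val '' d) ⊆ (N : Set H) := by
          rw [← (hcl N (hC hN)).closure_eq]
          exact closure_mono (by rintro _ ⟨y, hy, rfl⟩; exact hdn y hy)
        exact h2 h1
      have hmax : ∀ N' ∈ C, N' ≤ N := fun N' hN' v hv =>
        hUN (Set.mem_iUnion₂.2 ⟨N', hN', hv⟩)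
      exact ⟨N, Or.inr ⟨hN, hmax⟩, le_rfl⟩

lemma Tphi_mem (𝓛 : Set (Submodule ℂ H)) (h𝓛 : IsNest 𝓛) (T : H →L[ℂ] H)
    (M' : Submodule ℂ H) (hM' : M' ∈ 𝓛) {v : H} (hv : v ∈ phiT 𝓛 T M') : T v ∈ M' := by
  obtain ⟨⟨hcl, hbot, -, -, -⟩, htot⟩ := h𝓛
  have hclM' : IsClosed (M' : Set H) := hcl M' hM'
  have hmt : Set.MapsTo T (↑(sSup {N ∈ 𝓛 | ∀ w ∈ N, T w ∈ M'}) : Set H) (M' : Set H) := by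
    intro u hu
    have hdir : DirectedOn (· ≤ ·) {N ∈ 𝓛 | ∀ w ∈ N, T w ∈ M'} := by
      intro a ha b hb
      rcases htot a ha.1 b hb.1 with h | h
      · exact ⟨b, hb, h, le_rfl⟩
      · exact ⟨a, ha, le_rfl, h⟩
    have hne : Set.Nonempty {N ∈ 𝓛 | ∀ w ∈ N, T w ∈ M'} := by
      refine ⟨⊥, hbot, ?_⟩
      intro w hw
      rw [Submodule.mem_bot] at hw
      simp [hw]
    rcases (Submodule.mem_sSup_of_directed hne hdir).1 hu with ⟨N, hN, huN⟩
    exact hN.2 u huN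
  have hv' : v ∈ closure (↑(sSup {N ∈ 𝓛 | ∀ w ∈ N, T w ∈ M'}) : Set H) := hv
  have : T v ∈ closure (M' : Set H) := map_mem_closure T.continuous hv' hmt
  rwa [hclM'.closure_eq] at this

theorem stmt_8 (𝓛 : Set (Submodule ℂ H)) (h𝓛 : IsNest 𝓛)
    (T : H →L[ℂ] H) (M : Submodule ℂ H) (hM : M ∈ 𝓛) :
    ∃ x : H, phiT 𝓛 T M = Mx 𝓛 x ∧ PsiT 𝓛 T M = Mx 𝓛 (T x) := by
  classical
  obtain ⟨⟨hcl, hbot, htop, hinf, hsup⟩, htot⟩ := h𝓛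
  set φ := phiT 𝓛 T M with hφdef
  set Ψ := PsiT 𝓛 T M with hΨdef
  have hφ𝓛 : φ ∈ 𝓛 := hsup _ (Set.sep_subset _ _)
  have hΨ𝓛 : Ψ ∈ 𝓛 := hinf _ (Set.sep_subset _ _)
  have hφcl := hcl φ hφ𝓛
  have hΨcl := hcl Ψ hΨ𝓛
  have hmono : ∀ M₁ M₂ : Submodule ℂ H, M₁ ≤ M₂ → phiT 𝓛 T M₁ ≤ phiT 𝓛 T M₂ := by
    intro M₁ M₂ h
    exact Submodule.topologicalClosure_mono
      (sSup_le_sSup (fun N hN => ⟨hN.1, fun v hv => h (hN.2 v hv)⟩))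
  have hΨleM : Ψ ≤ M := sInf_le ⟨hM, rfl⟩
  have hTφΨ : ∀ v ∈ φ, T v ∈ Ψ := by
    intro v hv
    rw [hΨdef, PsiT, Submodule.mem_sInf]
    intro M' hM'
    exact Tphi_mem 𝓛 ⟨⟨hcl, hbot, htop, hinf, hsup⟩, htot⟩ T M' hM'.1 (hM'.2.symm ▸ hv)
  -- covering families
  obtain ⟨sA, hsA_sub, hsA_cnt, hsA_cov⟩ :=
    countable_cofinal 𝓛 htot hcl {N | N ∈ 𝓛 ∧ N < φ} (fun N hN => hN.1)
  obtain ⟨sB, hsB_sub, hsB_cnt, hsB_cov⟩ :=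
    countable_cofinal 𝓛 htot hcl {N | N ∈ 𝓛 ∧ N < Ψ} (fun N hN => hN.1)
  -- Baire category argument on ↥φ
  have hx : ∃ x : H, x ∈ φ ∧ (∀ N ∈ 𝓛, N < φ → x ∉ N) ∧ (∀ N ∈ 𝓛, N < Ψ → T x ∉ N) := by
    by_contra hcon
    push_neg at hcon
    haveI : CompleteSpace ↥φ := hφcl.completeSpace_coe
    haveI : BaireSpace ↥φ := inferInstance
    haveI : Countable ↥sA := hsA_cnt.to_subtype
    haveI : Countable ↥sB := hsB_cnt.to_subtype
    set f : ↥sA ⊕ ↥sB → Set ↥φ := fun i =>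
      Sum.rec (fun A => Subtype.val ⁻¹' (A.1 : Set H))
        (fun B => (fun x : ↥φ => T x.1) ⁻¹' (B.1 : Set H)) i with hf
    have hfc : ∀ i, IsClosed (f i) := by
      rintro (A | B)
      · exact (hcl A.1 (hsA_sub A.2).1).preimage continuous_subtype_val
      · exact (hcl B.1 (hsB_sub B.2).1).preimage (T.continuous.comp continuous_subtype_val)
    have hfU : ⋃ i, f i = Set.univ := by
      ext x
      simp only [Set.mem_iUnion, Set.mem_univ, iff_true]
      by_cases hA : ∃ N ∈ 𝓛, N < φ ∧ (x : H) ∈ N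
      · rcases hA with ⟨N, hN𝓛, hNφ, hxN⟩
        rcases hsA_cov N ⟨hN𝓛, hNφ⟩ with ⟨A, hAs, hNA⟩
        exact ⟨Sum.inl ⟨A, hAs⟩, hNA hxN⟩
      · push_neg at hA
        rcases hcon x x.2 (fun N hN hNφ => hA N hN hNφ) with ⟨N, hN𝓛, hNΨ, hTxN⟩
        rcases hsB_cov N ⟨hN𝓛, hNΨ⟩ with ⟨B, hBs, hNB⟩
        exact ⟨Sum.inr ⟨B, hBs⟩, hNB hTxN⟩
    obtain ⟨i, hi⟩ := nonempty_interior_of_iUnion_of_closed hfc hfU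
    cases i with
    | inl A =>
      have htopA : (Submodule.comap φ.subtype A.1) = ⊤ :=
        Submodule.eq_top_of_nonempty_interior' _ hi
      have : φ ≤ A.1 := by
        intro v hv
        have : (⟨v, hv⟩ : ↥φ) ∈ Submodule.comap φ.subtype A.1 := htopA ▸ Submodule.mem_top
        exact this
      exact (hsA_sub A.2).2.not_ge this
    | inr B =>
      have htopB : (Submodule.comap (T.comp φ.subtypeL : ↥φ →L[ℂ] H).toLinearMap B.1) = ⊤ :=
        Submodule.eq_top_of_nonempty_interior' _ hi
      have hTφB : ∀ v ∈ φ, T v ∈ B.1 := by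
        intro v hv
        have : (⟨v, hv⟩ : ↥φ) ∈
            Submodule.comap (T.comp φ.subtypeL : ↥φ →L[ℂ] H).toLinearMap B.1 :=
          htopB ▸ Submodule.mem_top
        exact this
      have hB𝓛 : B.1 ∈ 𝓛 := (hsB_sub B.2).1
      have hBΨ : B.1 < Ψ := (hsB_sub B.2).2
      have h1 : φ ≤ phiT 𝓛 T B.1 :=
        le_trans (le_sSup (show φ ∈ {N | N ∈ 𝓛 ∧ ∀ v ∈ N, T v ∈ B.1} from ⟨hφ𝓛, hTφB⟩))
          (Submodule.le_topologicalClosure _)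
      have h2 : phiT 𝓛 T B.1 ≤ φ := hmono B.1 M (le_trans hBΨ.le hΨleM)
      have hBS : phiT 𝓛 T B.1 = phiT 𝓛 T M := le_antisymm h2 h1
      have : Ψ ≤ B.1 := sInf_le ⟨hB𝓛, hBS⟩
      exact hBΨ.not_ge this
  obtain ⟨x, hxφ, hxA, hxB⟩ := hx
  refine ⟨x, ?_, ?_⟩
  · refine le_antisymm (le_sInf ?_) (sInf_le ⟨hφ𝓛, hxφ⟩)
    rintro N ⟨hN𝓛, hxN⟩
    rcases htot N hN𝓛 φ hφ𝓛 with h | h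
    · rcases h.lt_or_eq with hlt | rfl
      · exact absurd hxN (hxA N hN𝓛 hlt)
      · exact le_rfl
    · exact h
  · refine le_antisymm (le_sInf ?_) (sInf_le ⟨hΨ𝓛, hTφΨ x hxφ⟩)
    rintro N ⟨hN𝓛, hxN⟩
    rcases htot N hN𝓛 Ψ hΨ𝓛 with h | h
    · rcases h.lt_or_eq with hlt | rfl
      · exact absurd hxN (hxB N hN𝓛 hlt)
      · exact le_rfl
    · exact h
end

section
/- Let 𝓛 be a continuous nest on a complex separable Hilbert space H and let 𝓜 be a norm closed Lie 𝓣(𝓛)-module. If x, y ∈ H are nonzero and the rank-one operator x⊗y belongs to 𝓜, then for all z, w ∈ H and all M ∈ 𝓛 the operator (Q_{M^⊥}(Q_{M_x} z)) ⊗ (Q_M(Q_{(M̂_y)^⊥} w)) belongs to 𝓜. (In projection terms: Q_{M^⊥}((Q_{M_x}z) ⊗ (Q_{(M̂_y)^⊥}w))Q_M ∈ 𝓜.) -/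
open scoped InnerProductSpace

variable {H : Type*} [NormedAddCommGroup H] [InnerProductSpace ℂ H]
  [CompleteSpace H] [TopologicalSpace.SeparableSpace H]

set_option linter.unusedSectionVars false

section Aux

variable {𝓛 : Set (Submodule ℂ H)}

lemma rankOne_apply (x y z : H) : rankOne x y z = ⟪y, z⟫_ℂ • x := rfl

lemma rankOne_comp (x y a b : H) :
    (rankOne x y).comp (rankOne a b) = ⟪y, a⟫_ℂ • rankOne x b := by
  ext z
  simp [rankOne_apply, inner_smul_right, smul_smul, mul_comm]

lemma rankOne_comm (x y a b : H) :
    (rankOne x y).comp (rankOne a b) - (rankOne a b).comp (rankOne x y)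
      = ⟪y, a⟫_ℂ • rankOne x b - ⟪b, x⟫_ℂ • rankOne a y := by
  rw [rankOne_comp, rankOne_comp]

lemma rankOne_zero_left (y : H) : rankOne (0 : H) y = 0 := by
  ext z; simp [rankOne_apply]

lemma rankOne_zero_right (x : H) : rankOne x (0 : H) = 0 := by
  ext z; simp [rankOne_apply]

lemma norm_rankOne_le (x y : H) : ‖rankOne x y‖ ≤ ‖y‖ * ‖x‖ := by
  rw [rankOne, ContinuousLinearMap.norm_smulRight_apply, innerSL_apply_norm]

lemma rankOne_sub_left (x x' y : H) :
    rankOne x y - rankOne x' y = rankOne (x - x') y := by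
  ext z; simp [rankOne_apply, smul_sub]

lemma rankOne_sub_right (x y y' : H) :
    rankOne x y - rankOne x y' = rankOne x (y - y') := by
  ext z; simp [rankOne_apply, inner_sub_left, sub_smul]

lemma mem_of_smul_mem (𝓜 : Submodule ℂ (H →L[ℂ] H)) {c : ℂ} (hc : c ≠ 0)
    {T : H →L[ℂ] H} (h : c • T ∈ 𝓜) : T ∈ 𝓜 := by
  have := 𝓜.smul_mem c⁻¹ h
  rwa [smul_smul, inv_mul_cancel₀ hc, one_smul] at this

lemma rankOne_mem_nestAlg (hN : IsNest 𝓛) {N : Submodule ℂ H} (hNmem : N ∈ 𝓛)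
    {a b : H} (ha : a ∈ N) (hb : b ∈ Nᗮ) : rankOne a b ∈ nestAlg 𝓛 := by
  intro M hM v hv
  rcases hN.2 M hM N hNmem with h | h
  · have hbv : ⟪b, v⟫_ℂ = 0 :=
      Submodule.inner_left_of_mem_orthogonal (h hv) hb
    rw [rankOne_apply, hbv, zero_smul]
    exact M.zero_mem
  · rw [rankOne_apply]
    exact M.smul_mem _ (h ha)

-- lattice basics
lemma lat_closed (hL : IsSubspaceLattice 𝓛) {M : Submodule ℂ H} (hM : M ∈ 𝓛) :
    IsClosed (M : Set H) := hL.1 M hM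

lemma Mx_mem (hL : IsSubspaceLattice 𝓛) (x : H) : Mx 𝓛 x ∈ 𝓛 :=
  hL.2.2.2.1 _ (fun _ hN => hN.1)

lemma mem_Mx (x : H) : x ∈ Mx 𝓛 x :=
  Submodule.mem_sInf.2 fun _ hN => hN.2

lemma Mx_le {x : H} {N : Submodule ℂ H} (hN : N ∈ 𝓛) (hxN : x ∈ N) :
    Mx 𝓛 x ≤ N := sInf_le (Set.mem_sep hN hxN)

lemma Mhat_mem (hL : IsSubspaceLattice 𝓛) (y : H) : Mhat 𝓛 y ∈ 𝓛 :=
  hL.2.2.2.2 _ (fun _ hN => hN.1)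

lemma Mhat_orth (y : H) : ∀ v ∈ Mhat 𝓛 y, ⟪y, v⟫_ℂ = 0 := by
  have h1 : Mhat 𝓛 y ≤ (ℂ ∙ y)ᗮ := by
    apply Submodule.topologicalClosure_minimal
    · apply sSup_le
      intro N hN
      intro v hv
      exact Submodule.mem_orthogonal_singleton_iff_inner_right.2 (hN.2 v hv)
    · exact Submodule.isClosed_orthogonal _
  intro v hv
  exact Submodule.mem_orthogonal_singleton_iff_inner_right.1 (h1 hv)

lemma le_Mhat {y : H} {N : Submodule ℂ H} (hN : N ∈ 𝓛)
    (horth : ∀ v ∈ N, ⟪y, v⟫_ℂ = 0) : N ≤ Mhat 𝓛 y :=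
  le_trans (le_sSup (Set.mem_sep hN horth)) (Submodule.le_topologicalClosure _)

end Aux
section Aux2

variable {𝓛 : Set (Submodule ℂ H)}

lemma nest_exists_between (h𝓛 : IsContinuousNest 𝓛) {A B : Submodule ℂ H}
    (hA : A ∈ 𝓛) (hB : B ∈ 𝓛) (hAB : A < B) :
    ∃ C ∈ 𝓛, A < C ∧ C < B := by
  by_contra hcon
  push_neg at hcon
  have hsup : sSup {N ∈ 𝓛 | N < B} ≤ A := by
    apply sSup_le
    rintro N ⟨hN, hNB⟩
    rcases h𝓛.1.2 N hN A hA with h | h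
    · exact h
    · rcases eq_or_lt_of_le h with h' | h'
      · exact h'.ge
      · exact absurd hNB (hcon N hN h')
  have heq := h𝓛.2 B hB
  have hBle : B ≤ A := heq.trans_le
    (Submodule.topologicalClosure_minimal _ hsup (lat_closed h𝓛.1.1 hA))
  exact hAB.not_ge hBle

lemma nest_directedOn (h𝓛 : IsNest 𝓛) {S : Set (Submodule ℂ H)} (hS : S ⊆ 𝓛) :
    DirectedOn (· ≤ ·) S := by
  intro N₁ h₁ N₂ h₂
  rcases h𝓛.2 N₁ (hS h₁) N₂ (hS h₂) with h | h
  · exact ⟨N₂, h₂, h, le_rfl⟩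
  · exact ⟨N₁, h₁, le_rfl, h⟩

lemma exists_approx_below (h𝓛 : IsContinuousNest 𝓛) {B : Submodule ℂ H} (hB : B ∈ 𝓛)
    {u : H} (hu : u ∈ B) {A : Submodule ℂ H} (hA : A ∈ 𝓛) (hAB : A < B)
    {ε : ℝ} (hε : 0 < ε) :
    ∃ N ∈ 𝓛, N < B ∧ ∃ s ∈ N, ‖u - s‖ < ε := by
  have hu' : u ∈ closure (↑(sSup {N ∈ 𝓛 | N < B}) : Set H) := by
    have := h𝓛.2 B hB
    rw [this] at hu
    rwa [← Submodule.topologicalClosure_coe]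
  rcases Metric.mem_closure_iff.1 hu' ε hε with ⟨s, hs, hds⟩
  have hdir : DirectedOn (· ≤ ·) {N ∈ 𝓛 | N < B} :=
    nest_directedOn h𝓛.1 (fun _ hN => hN.1)
  have hne : {N | N ∈ 𝓛 ∧ N < B}.Nonempty := ⟨A, hA, hAB⟩
  rcases (Submodule.mem_sSup_of_directed hne hdir).1 hs with ⟨N, hN, hsN⟩
  exact ⟨N, hN.1, hN.2, s, hsN, by rwa [dist_eq_norm] at hds⟩

lemma orthogonal_topologicalClosure (K : Submodule ℂ H) :
    (K.topologicalClosure)ᗮ = Kᗮ := by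
  rw [← Submodule.orthogonal_orthogonal_eq_closure]
  haveI : CompleteSpace Kᗮ := (Submodule.isClosed_orthogonal K).completeSpace_coe
  haveI : Submodule.HasOrthogonalProjection Kᗮ := Submodule.HasOrthogonalProjection.ofCompleteSpace _
  exact Submodule.orthogonal_orthogonal Kᗮ

lemma exists_approx_above (h𝓛 : IsContinuousNest 𝓛) {A B : Submodule ℂ H}
    (hA : A ∈ 𝓛) (hB : B ∈ 𝓛) (hAB : A < B) {v : H} (hv : v ∈ Aᗮ)
    {ε : ℝ} (hε : 0 < ε) :
    ∃ N ∈ 𝓛, A < N ∧ ∃ s ∈ Nᗮ, ‖v - s‖ < ε := by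
  set S : Set (Submodule ℂ H) := {N ∈ 𝓛 | A < N} with hSdef
  have hSsub : S ⊆ 𝓛 := fun _ hN => hN.1
  have hSne : S.Nonempty := ⟨B, Set.mem_sep hB hAB⟩
  have hInf : sInf S = A := by
    have hAle : A ≤ sInf S := le_sInf fun N hN => hN.2.le
    rcases eq_or_lt_of_le hAle with h | h
    · exact h.symm
    · exfalso
      have hKmem : sInf S ∈ 𝓛 := h𝓛.1.1.2.2.2.1 _ hSsub
      have hsup : sSup {N ∈ 𝓛 | N < sInf S} ≤ A := by
        apply sSup_le
        rintro N ⟨hN, hNK⟩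
        rcases h𝓛.1.2 N hN A hA with h' | h'
        · exact h'
        · rcases eq_or_lt_of_le h' with h'' | h''
          · exact h''.ge
          · exact absurd (sInf_le (show N ∈ S from Set.mem_sep hN h'')) hNK.not_ge
      have heq := h𝓛.2 _ hKmem
      have : sInf S ≤ A := heq.trans_le
        (Submodule.topologicalClosure_minimal _ hsup (lat_closed h𝓛.1.1 hA))
      exact h.not_ge this
  -- Aᗮ is the closure of the sup of the orthocomplements
  have hT : Aᗮ = (sSup ((·ᗮ : Submodule ℂ H → Submodule ℂ H) '' S)).topologicalClosure := by
    have h1 : ((sSup ((·ᗮ : Submodule ℂ H → Submodule ℂ H) '' S)).topologicalClosure)ᗮ = A := by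
      rw [orthogonal_topologicalClosure, ← Submodule.sInf_orthogonal, iInf_image]
      have : ∀ N ∈ S, Nᗮᗮ = N := by
        intro N hN
        haveI : CompleteSpace N := (lat_closed h𝓛.1.1 (hSsub hN)).completeSpace_coe
        exact Submodule.orthogonal_orthogonal N
      calc ⨅ N ∈ S, Nᗮᗮ = ⨅ N ∈ S, N := by
            exact biInf_congr this
        _ = sInf S := sInf_eq_iInf.symm
        _ = A := hInf
    have h2 := congrArg (·ᗮ : Submodule ℂ H → Submodule ℂ H) h1
    rw [← h2]
    haveI : CompleteSpace ((sSup ((·ᗮ : Submodule ℂ H → Submodule ℂ H) '' S)).topologicalClosure) :=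
      (Submodule.isClosed_topologicalClosure _).completeSpace_coe
    haveI : Submodule.HasOrthogonalProjection ((sSup ((·ᗮ : Submodule ℂ H → Submodule ℂ H) '' S)).topologicalClosure) :=
      Submodule.HasOrthogonalProjection.ofCompleteSpace _
    exact Submodule.orthogonal_orthogonal _
  have hv' : v ∈ closure (↑(sSup ((·ᗮ : Submodule ℂ H → Submodule ℂ H) '' S)) : Set H) := by
    rw [hT] at hv
    rwa [← Submodule.topologicalClosure_coe]
  have hdir : DirectedOn (· ≤ ·) ((·ᗮ : Submodule ℂ H → Submodule ℂ H) '' S) := by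
    rintro _ ⟨N₁, h₁, rfl⟩ _ ⟨N₂, h₂, rfl⟩
    rcases h𝓛.1.2 N₁ (hSsub h₁) N₂ (hSsub h₂) with h | h
    · exact ⟨N₁ᗮ, ⟨N₁, h₁, rfl⟩, le_rfl, Submodule.orthogonal_le h⟩
    · exact ⟨N₂ᗮ, ⟨N₂, h₂, rfl⟩, Submodule.orthogonal_le h, le_rfl⟩
  rcases Metric.mem_closure_iff.1 hv' ε hε with ⟨s, hs, hds⟩
  rcases (Submodule.mem_sSup_of_directed (hSne.image _) hdir).1 hs with ⟨_, ⟨N, hN, rfl⟩, hsN⟩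
  exact ⟨N, hN.1, hN.2, s, hsN, by rwa [dist_eq_norm] at hds⟩

end Aux2
section Aux3

lemma projVec_eq {N : Submodule ℂ H} [CompleteSpace N] (hc : IsClosed (N : Set H)) (z : H) :
    projVec N z = (Submodule.orthogonalProjectionOnto N z : H) := by
  unfold projVec
  rw [dif_pos hc]

lemma norm_proj_le {N : Submodule ℂ H} [CompleteSpace N] (t : H) :
    ‖(Submodule.orthogonalProjectionOnto N t : H)‖ ≤ ‖t‖ := by
  calc ‖(Submodule.orthogonalProjectionOnto N t : H)‖ = ‖Submodule.orthogonalProjectionOnto N t‖ := rfl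
    _ ≤ ‖Submodule.orthogonalProjectionOnto N‖ * ‖t‖ := (Submodule.orthogonalProjectionOnto N).le_opNorm t
    _ ≤ 1 * ‖t‖ :=
        mul_le_mul_of_nonneg_right (Submodule.orthogonalProjectionOnto_norm_le N) (norm_nonneg t)
    _ = ‖t‖ := one_mul _

lemma dist_proj_le {N : Submodule ℂ H} [CompleteSpace N] {u s : H} (hs : s ∈ N) :
    ‖u - Submodule.orthogonalProjectionOnto N u‖ ≤ ‖u - s‖ := by
  rw [show ((Submodule.orthogonalProjectionOnto N u : N) : H) = N.starProjection u from rfl,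
    Submodule.starProjection_minimal]
  exact ciInf_le ⟨0, by rintro _ ⟨p, rfl⟩; exact norm_nonneg _⟩ (⟨s, hs⟩ : N)

lemma norm_proj_mono {N₁ N₂ : Submodule ℂ H} [CompleteSpace N₁] [CompleteSpace N₂]
    (h : N₁ ≤ N₂) (t : H) :
    ‖(Submodule.orthogonalProjectionOnto N₁ t : H)‖ ≤ ‖(Submodule.orthogonalProjectionOnto N₂ t : H)‖ := by
  rw [← Submodule.orthogonalProjectionOnto_starProjection_of_le h t]
  exact norm_proj_le _

end Aux3
theorem stmt_15 (𝓛 : Set (Submodule ℂ H)) (h𝓛 : IsContinuousNest 𝓛)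
    (𝓜 : Submodule ℂ (H →L[ℂ] H)) (hclosed : IsClosed (𝓜 : Set (H →L[ℂ] H)))
    (hLie : IsLieModule 𝓛 𝓜)
    (x y : H) (hx : x ≠ 0) (hy : y ≠ 0) (hxy : rankOne x y ∈ 𝓜) :
    ∀ (z w : H), ∀ M ∈ 𝓛,
      rankOne (projVec Mᗮ (projVec (Mx 𝓛 x) z))
        (projVec M (projVec ((Mhat 𝓛 y)ᗮ) w)) ∈ 𝓜 := by
  intro z w M hM
  classical
  have hNest := h𝓛.1
  have hLat := hNest.1
  have hMc : IsClosed (M : Set H) := lat_closed hLat hM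
  haveI : CompleteSpace M := hMc.completeSpace_coe
  haveI : CompleteSpace (Mᗮ : Submodule ℂ H) :=
    (Submodule.isClosed_orthogonal M).completeSpace_coe
  set B := Mx 𝓛 x with hBdef
  set A := Mhat 𝓛 y with hAdef
  have hBmem : B ∈ 𝓛 := Mx_mem hLat x
  have hAmem : A ∈ 𝓛 := Mhat_mem hLat y
  have hBc : IsClosed (B : Set H) := lat_closed hLat hBmem
  have hAc : IsClosed (A : Set H) := lat_closed hLat hAmem
  haveI : CompleteSpace B := hBc.completeSpace_coe
  haveI : CompleteSpace A := hAc.completeSpace_coe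
  haveI : CompleteSpace (Aᗮ : Submodule ℂ H) :=
    (Submodule.isClosed_orthogonal A).completeSpace_coe
  rw [projVec_eq hBc, projVec_eq (Submodule.isClosed_orthogonal M),
      projVec_eq (Submodule.isClosed_orthogonal A), projVec_eq hMc]
  set q : H := (Submodule.orthogonalProjectionOnto B z : H) with hqdef
  set r : H := (Submodule.orthogonalProjectionOnto Aᗮ w : H) with hrdef
  by_cases hBM : B ≤ M
  · -- trivial case: u component vanishes
    have hqm : q ∈ Mᗮᗮ := M.le_orthogonal_orthogonal (hBM (SetLike.coe_mem _))
    have h0 : (Submodule.orthogonalProjectionOnto Mᗮ q : H) = 0 := by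
      rw [Submodule.orthogonalProjectionOnto_apply_of_mem_orthogonal hqm]
      rfl
    rw [h0, rankOne_zero_left]
    exact 𝓜.zero_mem
  have hMB : M < B := by
    rcases hNest.2 M hM B hBmem with h | h
    · exact lt_of_le_of_ne h (fun e => hBM e.ge)
    · exact absurd h hBM
  by_cases hMA : M ≤ A
  · -- trivial case: v component vanishes
    have hrm : r ∈ Mᗮ := Submodule.orthogonal_le hMA (SetLike.coe_mem _)
    have h0 : (Submodule.orthogonalProjectionOnto M r : H) = 0 := by
      rw [Submodule.orthogonalProjectionOnto_apply_of_mem_orthogonal hrm]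
      rfl
    rw [h0, rankOne_zero_right]
    exact 𝓜.zero_mem
  have hAM : A < M := by
    rcases hNest.2 M hM A hAmem with h | h
    · exact absurd h hMA
    · exact lt_of_le_of_ne h (fun e => hMA e.ge)
  -- main case : A < M < B
  set u : H := (Submodule.orthogonalProjectionOnto Mᗮ q : H) with hudef
  set v : H := (Submodule.orthogonalProjectionOnto M r : H) with hvdef
  have hu_orth : u ∈ Mᗮ := SetLike.coe_mem _
  have hv_M : v ∈ M := SetLike.coe_mem _
  have hu_eq : u = q - (Submodule.orthogonalProjectionOnto M q : H) := Submodule.starProjection_orthogonal_val q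
  have huB : u ∈ B := by
    rw [hu_eq]
    exact B.sub_mem (SetLike.coe_mem _) (hMB.le (SetLike.coe_mem _))
  have hv_eq : v = r - (Submodule.orthogonalProjectionOnto Mᗮ r : H) := by
    have h1 : (Submodule.orthogonalProjectionOnto Mᗮ r : H) = r - v := Submodule.starProjection_orthogonal_val r
    rw [h1, sub_sub_cancel]
  have hv_orthA : v ∈ Aᗮ := by
    rw [hv_eq]
    exact Submodule.sub_mem _ (SetLike.coe_mem _)
      (Submodule.orthogonal_le hAM.le (SetLike.coe_mem _))
  -- closure argument
  suffices hcl : rankOne u v ∈ closure (𝓜 : Set (H →L[ℂ] H)) by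
    rwa [hclosed.closure_eq] at hcl
  rw [Metric.mem_closure_iff]
  intro ε hε
  set C : ℝ := ‖u‖ + ‖v‖ + 1 with hCdef
  have hC : 0 < C := by positivity
  set δ : ℝ := min 1 (ε / (2 * C)) with hδdef
  have hδpos : 0 < δ := lt_min one_pos (by positivity)
  have hδ1 : δ ≤ 1 := min_le_left _ _
  have hδε : δ * C ≤ ε / 2 := by
    have h1 : δ ≤ ε / (2 * C) := min_le_right _ _
    have h2 : δ * C ≤ (ε / (2 * C)) * C := mul_le_mul_of_nonneg_right h1 hC.le
    have h3 : (ε / (2 * C)) * C = ε / 2 := by field_simp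
    rw [h3] at h2
    exact h2
  -- choose N₂ with M ≤ N₂ < B approximating u
  obtain ⟨N₀, hN₀mem, hN₀B, s, hsN₀, hus⟩ :=
    exists_approx_below h𝓛 hBmem huB hM hMB hδpos
  obtain ⟨N₂, hN₂mem, hMN₂, hN₂B, s', hs'N₂, hus'⟩ :
      ∃ N₂, N₂ ∈ 𝓛 ∧ M ≤ N₂ ∧ N₂ < B ∧ ∃ s' ∈ N₂, ‖u - s'‖ < δ := by
    rcases hNest.2 N₀ hN₀mem M hM with h | h
    · exact ⟨M, hM, le_rfl, hMB, s, h hsN₀, hus⟩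
    · exact ⟨N₀, hN₀mem, h, hN₀B, s, hsN₀, hus⟩
  haveI : CompleteSpace N₂ := (lat_closed hLat hN₂mem).completeSpace_coe
  set a : H := (Submodule.orthogonalProjectionOnto N₂ u : H) with hadef
  have hua : ‖u - a‖ < δ := lt_of_le_of_lt (dist_proj_le hs'N₂) hus'
  have haN₂ : a ∈ N₂ := SetLike.coe_mem _
  have haMo : a ∈ Mᗮ := by
    rw [Submodule.mem_orthogonal]
    intro m hm
    have h1 : ⟪m, u - a⟫_ℂ = 0 := Submodule.inner_right_of_mem_orthogonal (hMN₂ hm)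
      (Submodule.sub_starProjection_mem_orthogonal u)
    have h2 : ⟪m, u⟫_ℂ = 0 := Submodule.inner_right_of_mem_orthogonal hm hu_orth
    have h3 : ⟪m, a⟫_ℂ = ⟪m, u⟫_ℂ - ⟪m, u - a⟫_ℂ := by
      rw [inner_sub_right]; ring
    rw [h3, h1, h2, sub_zero]
  set b : H := x - (Submodule.orthogonalProjectionOnto N₂ x : H) with hbdef
  have hbo : b ∈ N₂ᗮ := Submodule.sub_starProjection_mem_orthogonal x
  have hbne : b ≠ 0 := by
    intro h0
    have hxN₂ : x ∈ N₂ := by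
      have : x = (Submodule.orthogonalProjectionOnto N₂ x : H) := by
        have := sub_eq_zero.1 h0; exact this
      rw [this]; exact SetLike.coe_mem _
    exact hN₂B.not_ge (Mx_le hN₂mem hxN₂)
  have hbx : ⟪b, x⟫_ℂ = ⟪b, b⟫_ℂ := by
    have h1 : ⟪b, (Submodule.orthogonalProjectionOnto N₂ x : H)⟫_ℂ = 0 :=
      Submodule.inner_left_of_mem_orthogonal (SetLike.coe_mem _) hbo
    have h2 : ⟪b, x⟫_ℂ = ⟪b, b⟫_ℂ + ⟪b, (Submodule.orthogonalProjectionOnto N₂ x : H)⟫_ℂ := by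
      rw [← inner_add_right, hbdef, sub_add_cancel]
    rw [h2, h1, add_zero]
  have hbxne : ⟪b, x⟫_ℂ ≠ 0 := by rw [hbx]; exact inner_self_ne_zero.2 hbne
  -- choose N'' with A < N'' < M and small projection of v
  obtain ⟨N₀', hN₀'mem, hAN₀', s₀, hs₀, hvs₀⟩ :=
    exists_approx_above h𝓛 hAmem hM hAM hv_orthA hδpos
  obtain ⟨N'', hN''mem, hAN'', hN''M, hN''le⟩ :
      ∃ N'', N'' ∈ 𝓛 ∧ A < N'' ∧ N'' < M ∧ N'' ≤ N₀' := by
    by_cases hlt : N₀' < M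
    · exact ⟨N₀', hN₀'mem, hAN₀', hlt, le_rfl⟩
    · have hMle : M ≤ N₀' := by
        rcases hNest.2 N₀' hN₀'mem M hM with h | h
        · rcases eq_or_lt_of_le h with h' | h'
          · exact h'.ge
          · exact absurd h' hlt
        · exact h
      obtain ⟨Cm, hCmem, hACm, hCM⟩ := nest_exists_between h𝓛 hAmem hM hAM
      exact ⟨Cm, hCmem, hACm, hCM, hCM.le.trans hMle⟩
  haveI : CompleteSpace N'' := (lat_closed hLat hN''mem).completeSpace_coe
  have hPvN'' : ‖(Submodule.orthogonalProjectionOnto N'' v : H)‖ < δ := by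
    have hs₀' : s₀ ∈ N''ᗮ := Submodule.orthogonal_le hN''le hs₀
    have h1 : Submodule.orthogonalProjectionOnto N'' s₀ = 0 :=
      Submodule.orthogonalProjectionOnto_apply_of_mem_orthogonal hs₀'
    have h2 : (Submodule.orthogonalProjectionOnto N'' v : H) = (Submodule.orthogonalProjectionOnto N'' (v - s₀) : H) := by
      rw [map_sub, h1, sub_zero]
    calc ‖(Submodule.orthogonalProjectionOnto N'' v : H)‖
        = ‖(Submodule.orthogonalProjectionOnto N'' (v - s₀) : H)‖ := by rw [h2]
      _ ≤ ‖v - s₀‖ := norm_proj_le _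
      _ < δ := hvs₀
  set d' : H := v - (Submodule.orthogonalProjectionOnto N'' v : H) with hd'def
  have hd'o : d' ∈ N''ᗮ := Submodule.sub_starProjection_mem_orthogonal v
  have hd'M : d' ∈ M := M.sub_mem hv_M (hN''M.le (SetLike.coe_mem _))
  have hvd' : ‖v - d'‖ < δ := by
    have : v - d' = (Submodule.orthogonalProjectionOnto N'' v : H) := by rw [hd'def, sub_sub_cancel]
    rw [this]; exact hPvN''
  clear_value d'
  -- choose N₁ < N₃ < N'' above A, and the vectors c, e₁, e₂, d₀
  obtain ⟨N₃, hN₃mem, hAN₃, hN₃N''⟩ := nest_exists_between h𝓛 hAmem hN''mem hAN''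
  obtain ⟨N₁, hN₁mem, hAN₁, hN₁N₃⟩ := nest_exists_between h𝓛 hAmem hN₃mem hAN₃
  haveI : CompleteSpace N₁ := (lat_closed hLat hN₁mem).completeSpace_coe
  haveI : CompleteSpace N₃ := (lat_closed hLat hN₃mem).completeSpace_coe
  set c : H := (Submodule.orthogonalProjectionOnto N₁ y : H) with hcdef
  have hcN₁ : c ∈ N₁ := SetLike.coe_mem _
  have hyc : ⟪y, c⟫_ℂ = ⟪c, c⟫_ℂ := by
    have h1 : ⟪y - c, c⟫_ℂ = 0 := Submodule.inner_left_of_mem_orthogonal hcN₁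
      (Submodule.sub_starProjection_mem_orthogonal y)
    have h2 : ⟪y, c⟫_ℂ = ⟪y - c, c⟫_ℂ + ⟪c, c⟫_ℂ := by
      rw [← inner_add_left, sub_add_cancel]
    rw [h2, h1, zero_add]
  have hcne : c ≠ 0 := by
    intro h0
    have hyo : y ∈ N₁ᗮ := by
      have h1 : y - c ∈ N₁ᗮ := Submodule.sub_starProjection_mem_orthogonal (K := N₁) y
      rwa [h0, sub_zero] at h1
    have : ∀ t ∈ N₁, ⟪y, t⟫_ℂ = 0 := fun t ht =>
      Submodule.inner_left_of_mem_orthogonal ht hyo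
    exact hAN₁.not_ge (le_Mhat hN₁mem this)
  have hycne : ⟪y, c⟫_ℂ ≠ 0 := by rw [hyc]; exact inner_self_ne_zero.2 hcne
  obtain ⟨p₁, hp₁N₃, hp₁⟩ := SetLike.exists_of_lt hN₁N₃
  set e₁ : H := p₁ - (Submodule.orthogonalProjectionOnto N₁ p₁ : H) with he₁def
  have he₁N₃ : e₁ ∈ N₃ := N₃.sub_mem hp₁N₃ (hN₁N₃.le (SetLike.coe_mem _))
  have he₁o : e₁ ∈ N₁ᗮ := Submodule.sub_starProjection_mem_orthogonal p₁
  have he₁ne : e₁ ≠ 0 := by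
    intro h0
    apply hp₁
    have : p₁ = (Submodule.orthogonalProjectionOnto N₁ p₁ : H) := sub_eq_zero.1 h0
    rw [this]; exact SetLike.coe_mem _
  obtain ⟨p₂, hp₂N'', hp₂⟩ := SetLike.exists_of_lt hN₃N''
  set e₂ : H := p₂ - (Submodule.orthogonalProjectionOnto N₃ p₂ : H) with he₂def
  have he₂N'' : e₂ ∈ N'' := N''.sub_mem hp₂N'' (hN₃N''.le (SetLike.coe_mem _))
  have he₂o : e₂ ∈ N₃ᗮ := Submodule.sub_starProjection_mem_orthogonal p₂
  have he₂ne : e₂ ≠ 0 := by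
    intro h0
    apply hp₂
    have : p₂ = (Submodule.orthogonalProjectionOnto N₃ p₂ : H) := sub_eq_zero.1 h0
    rw [this]; exact SetLike.coe_mem _
  obtain ⟨d₀, hd₀ne, hd₀N'', hd₀o, hd₀x⟩ :
      ∃ d₀ : H, d₀ ≠ 0 ∧ d₀ ∈ N'' ∧ d₀ ∈ N₁ᗮ ∧ ⟪x, d₀⟫_ℂ = 0 := by
    by_cases hxe : ⟪x, e₁⟫_ℂ = 0
    · exact ⟨e₁, he₁ne, hN₃N''.le he₁N₃, he₁o, hxe⟩
    · refine ⟨⟪x, e₂⟫_ℂ • e₁ - ⟪x, e₁⟫_ℂ • e₂, ?_, ?_, ?_, ?_⟩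
      · intro h0
        have h1 : ⟪e₂, e₁⟫_ℂ = 0 :=
          Submodule.inner_left_of_mem_orthogonal he₁N₃ he₂o
        have h2 := congrArg (fun t => ⟪e₂, t⟫_ℂ) h0
        simp only [inner_sub_right, inner_smul_right, inner_zero_right, h1, mul_zero,
          zero_sub, neg_eq_zero] at h2
        rcases mul_eq_zero.1 h2 with h3 | h3
        · exact hxe h3
        · exact inner_self_ne_zero.2 he₂ne h3
      · exact N''.sub_mem (N''.smul_mem _ (hN₃N''.le he₁N₃)) (N''.smul_mem _ he₂N'')
      · exact Submodule.sub_mem _ (Submodule.smul_mem _ _ he₁o)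
          (Submodule.smul_mem _ _ (Submodule.orthogonal_le hN₁N₃.le he₂o))
      · rw [inner_sub_right, inner_smul_right, inner_smul_right]; ring
  have hd₀M : d₀ ∈ M := hN''M.le hd₀N''
  -- commutator chain
  have hT₁ : rankOne c d₀ ∈ nestAlg 𝓛 := rankOne_mem_nestAlg hNest hN₁mem hcN₁ hd₀o
  have hA₁ := hLie _ hxy _ hT₁
  rw [rankOne_comm] at hA₁
  have hd₀x' : ⟪d₀, x⟫_ℂ = 0 := inner_eq_zero_symm.1 hd₀x
  rw [hd₀x', zero_smul, sub_zero] at hA₁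
  have hB₁ : rankOne x d₀ ∈ 𝓜 := mem_of_smul_mem 𝓜 hycne hA₁
  have hT₂ : rankOne a b ∈ nestAlg 𝓛 := rankOne_mem_nestAlg hNest hN₂mem haN₂ hbo
  have hA₂ := hLie _ hB₁ _ hT₂
  rw [rankOne_comm] at hA₂
  have hd₀a : ⟪d₀, a⟫_ℂ = 0 := Submodule.inner_right_of_mem_orthogonal hd₀M haMo
  rw [hd₀a, zero_smul, zero_sub] at hA₂
  have hB₂ : rankOne a d₀ ∈ 𝓜 := by
    have := 𝓜.neg_mem hA₂
    rw [neg_neg] at this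
    exact mem_of_smul_mem 𝓜 hbxne this
  have hT₃ : rankOne d₀ d' ∈ nestAlg 𝓛 := rankOne_mem_nestAlg hNest hN''mem hd₀N'' hd'o
  have hA₃ := hLie _ hB₂ _ hT₃
  rw [rankOne_comm] at hA₃
  have hd'a : ⟪d', a⟫_ℂ = 0 := Submodule.inner_right_of_mem_orthogonal hd'M haMo
  rw [hd'a, zero_smul, sub_zero] at hA₃
  have hd₀d₀ : ⟪d₀, d₀⟫_ℂ ≠ 0 := inner_self_ne_zero.2 hd₀ne
  have hB₃ : rankOne a d' ∈ 𝓜 := mem_of_smul_mem 𝓜 hd₀d₀ hA₃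
  -- the estimate
  refine ⟨rankOne a d', hB₃, ?_⟩
  rw [dist_eq_norm]
  have hsplit : rankOne u v - rankOne a d' = rankOne (u - a) v + rankOne a (v - d') := by
    rw [← rankOne_sub_left, ← rankOne_sub_right, sub_add_sub_cancel]
  rw [hsplit]
  have hb1 : ‖rankOne (u - a) v‖ ≤ ‖v‖ * ‖u - a‖ := norm_rankOne_le _ _
  have hb2 : ‖rankOne a (v - d')‖ ≤ ‖v - d'‖ * ‖a‖ := norm_rankOne_le _ _
  have hna : ‖a‖ ≤ ‖u‖ + 1 := by
    have h1 : a = u - (u - a) := by rw [sub_sub_cancel]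
    calc ‖a‖ = ‖u - (u - a)‖ := by rw [← h1]
      _ ≤ ‖u‖ + ‖u - a‖ := norm_sub_le _ _
      _ ≤ ‖u‖ + 1 := add_le_add_right (hua.le.trans hδ1) ‖u‖
  calc ‖rankOne (u - a) v + rankOne a (v - d')‖
      ≤ ‖rankOne (u - a) v‖ + ‖rankOne a (v - d')‖ := norm_add_le _ _
    _ ≤ ‖v‖ * ‖u - a‖ + ‖v - d'‖ * ‖a‖ := add_le_add hb1 hb2
    _ ≤ ‖v‖ * δ + δ * (‖u‖ + 1) := by
        refine add_le_add (mul_le_mul_of_nonneg_left hua.le (norm_nonneg v)) ?_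
        exact mul_le_mul hvd'.le hna (norm_nonneg a) hδpos.le
    _ = δ * C := by rw [hCdef]; ring
    _ ≤ ε / 2 := hδε
    _ < ε := half_lt_self hε
end
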